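/- arXiv:1802.05750 — 5 statements merged into one kernel-verified Lean document; each statement's English description precedes it below -/
import Mathlib

section
/- Let κ be an uncountable regular cardinal with κ^{<κ}=κ. If λ = cov(M_κ) = cof(M_κ), where M_κ is the ideal of κ-meagre subsets of 2^κ, then there exists a λ-κ-Lusin set L ⊆ 2^κ, i.e., a set of cardinality at least λ such that |L ∩ X| < λ for every κ-meagre set X. -/
noncomputable section

open Cardinal Set

namespace GenSp

/-- The index set: a canonical type of order type `κ.ord`. -/
abbrev I (κ : Cardinal.{0}) : Type := κ.ord.ToType

variable (κ : Cardinal.{0}) (A : Type)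

/-- The generalized space `A^κ`. -/
abbrev Sp : Type := I κ → A

/-- The basic clopen set `[x ↾ ξ]`: all functions agreeing with `x` below `ξ`. -/
def cyl (x : Sp κ A) (ξ : I κ) : Set (Sp κ A) := {y | ∀ β < ξ, y β = x β}

/-- The bounded topology on `A^κ`, generated by the basic clopen sets. -/
def bt : TopologicalSpace (Sp κ A) :=
  .generateFrom {S | ∃ x ξ, S = cyl κ A x ξ}

/-- Open in the bounded topology. -/
def OpenK (s : Set (Sp κ A)) : Prop := @IsOpen _ (bt κ A) s

/-- Closed in the bounded topology. -/
def ClosedK (s : Set (Sp κ A)) : Prop := @IsClosed _ (bt κ A) s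

/-- Nowhere dense in the bounded topology. -/
def NwdK (s : Set (Sp κ A)) : Prop := @IsNowhereDense _ (bt κ A) s

/-- κ-meagre: a union of (at most) κ nowhere dense sets. -/
def MeagreK (s : Set (Sp κ A)) : Prop :=
  ∃ f : I κ → Set (Sp κ A), (∀ i, NwdK κ A (f i)) ∧ s = ⋃ i, f i

/-- κ-strongly null set. -/
def SNullK (S : Set (Sp κ A)) : Prop :=
  ∀ ξ : I κ → I κ, ∃ a : I κ → Sp κ A, S ⊆ ⋃ α, cyl κ A (a α) (ξ α)

/-- Coordinatewise addition over `ℤ₂` (translation by `x`). -/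
def xadd (x y : Sp κ Bool) : Sp κ Bool := fun i => xor (x i) (y i)

/-- The covering number of the κ-meagre ideal. -/
def covM : Cardinal :=
  sInf {c | ∃ 𝒜 : Set (Set (Sp κ A)), #𝒜 = c ∧ (∀ s ∈ 𝒜, MeagreK κ A s) ∧ ⋃₀ 𝒜 = Set.univ}

/-- The cofinality of the κ-meagre ideal. -/
def cofM : Cardinal :=
  sInf {c | ∃ 𝒜 : Set (Set (Sp κ A)), #𝒜 = c ∧ (∀ s ∈ 𝒜, MeagreK κ A s) ∧
    ∀ t, MeagreK κ A t → ∃ s ∈ 𝒜, t ⊆ s}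

/-- κ is weakly compact: uncountable and with the partition property κ → (κ)²₂. -/
def IsWeaklyCompact (κ : Cardinal.{0}) : Prop :=
  ℵ₀ < κ ∧ ∀ c : I κ → I κ → Bool, ∃ H : Set (I κ), #H = κ ∧
    ∃ b : Bool, ∀ i ∈ H, ∀ j ∈ H, i < j → c i j = b

/-- `S` is κ-meagre relative to `P` (in the subspace topology). -/
def MeagreInK (P S : Set (Sp κ A)) : Prop :=
  ∃ f : I κ → Set P,
    (∀ i, @IsNowhereDense _ (TopologicalSpace.induced Subtype.val (bt κ A)) (f i)) ∧
    {x : P | (x : Sp κ A) ∈ S} = ⋃ i, f i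

/-- Perfect set in the bounded topology. -/
def PerfK (P : Set (Sp κ A)) : Prop := @Perfect _ (bt κ A) P

/-- Perfectly κ-meagre set. -/
def PMeagreK (S : Set (Sp κ A)) : Prop := ∀ P, PerfK κ A P → MeagreInK κ A P S

/-- κ-λ-set. -/
def KLambdaSet (S : Set (Sp κ A)) : Prop :=
  ∀ B ⊆ S, #B ≤ κ → ∃ G : I κ → Set (Sp κ A),
    (∀ i, OpenK κ A (G i)) ∧ (⋂ i, G i) ∩ S = B

/-- κ-σ-set. -/
def KSigmaSet (S : Set (Sp κ A)) : Prop :=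
  ∀ F : I κ → Set (Sp κ A), (∀ i, ClosedK κ A (F i)) →
    ∃ G : I κ → Set (Sp κ A), (∀ i, OpenK κ A (G i)) ∧
      S ∩ (⋃ i, F i) = S ∩ (⋂ i, G i)

/-- κ-γ-set: every open (proper) κ-cover contains a κ-γ-subcover of size κ. -/
def KGammaSet (X : Set (Sp κ A)) : Prop :=
  ∀ 𝒰 : Set (Set (Sp κ A)), (∀ U ∈ 𝒰, OpenK κ A U) → X ∉ 𝒰 →
    (∀ C ⊆ X, #C < κ → ∃ U ∈ 𝒰, C ⊆ U) →
    ∃ U : I κ → Set (Sp κ A), (∀ α, U α ∈ 𝒰) ∧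
      X ⊆ ⋃ α, ⋂ β, ⋂ (_ : α < β), U β

/-- A (proper) open cover of `X` of size κ, indexed by `I κ`. -/
def IsOCovSeq (X : Set (Sp κ A)) (U : I κ → Set (Sp κ A)) : Prop :=
  (∀ α, OpenK κ A (U α)) ∧ (∀ α, U α ≠ X) ∧ X ⊆ ⋃ α, U α

/-- A (proper) κ-γ-cover of `X`, indexed by `I κ`. -/
def IsGammaCovSeq (X : Set (Sp κ A)) (U : I κ → Set (Sp κ A)) : Prop :=
  (∀ α, OpenK κ A (U α)) ∧ (∀ α, U α ≠ X) ∧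
    X ⊆ ⋃ α, ⋂ β, ⋂ (_ : α < β), U β

/-- The cover `U` is essentially of size κ: no subfamily of size `< κ` covers `X`. -/
def EssK (X : Set (Sp κ A)) (U : I κ → Set (Sp κ A)) : Prop :=
  ∀ s : Set (I κ), #s < κ → ¬ X ⊆ ⋃ β ∈ s, U β

/-- The selection principle `S₁^κ(Γ_κ, Γ_κ)`. -/
def S1GammaGamma (X : Set (Sp κ A)) : Prop :=
  ∀ 𝒰 : I κ → I κ → Set (Sp κ A), (∀ α, IsGammaCovSeq κ A X (𝒰 α)) →
    ∃ f : I κ → I κ, IsGammaCovSeq κ A X (fun α => 𝒰 α (f α))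

/-- The κ-Hurewicz property `U^κ_{<κ}(O_κ, Γ_κ)`. -/
def KHurewicz (X : Set (Sp κ A)) : Prop :=
  ∀ 𝒰 : I κ → I κ → Set (Sp κ A), (∀ α, IsOCovSeq κ A X (𝒰 α)) →
    (∀ α, EssK κ A X (𝒰 α)) →
    ∃ V : I κ → Set (I κ), (∀ α, #(V α) < κ) ∧
      IsGammaCovSeq κ A X (fun α => ⋃ β ∈ V α, 𝒰 α β)

/-- The κ-Menger property `U^κ_{<κ}(O_κ, O_κ)`. -/
def KMenger (X : Set (Sp κ A)) : Prop :=
  ∀ 𝒰 : I κ → I κ → Set (Sp κ A), (∀ α, IsOCovSeq κ A X (𝒰 α)) →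
    (∀ α, EssK κ A X (𝒰 α)) →
    ∃ V : I κ → Set (I κ), (∀ α, #(V α) < κ) ∧
      IsOCovSeq κ A X (fun α => ⋃ β ∈ V α, 𝒰 α β)

/-- The κ-Rothberger property `S₁^κ(O_κ, O_κ)`. -/
def KRothberger (X : Set (Sp κ A)) : Prop :=
  ∀ 𝒰 : I κ → I κ → Set (Sp κ A), (∀ α, IsOCovSeq κ A X (𝒰 α)) →
    ∃ f : I κ → I κ, IsOCovSeq κ A X (fun α => 𝒰 α (f α))

/-- Closed unbounded subset of `I κ`. -/
def IsClubK (S : Set (I κ)) : Prop :=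
  (∀ a : I κ, ∃ b ∈ S, a < b) ∧
  (∀ a : I κ, (∃ b, b < a) → (∀ b < a, ∃ c ∈ S, b < c ∧ c < a) → a ∈ S)

/-- Stationary subset of `I κ`. -/
def IsStatK (S : Set (I κ)) : Prop :=
  ∀ C : Set (I κ), IsClubK κ C → (S ∩ C).Nonempty

/-- The diamond principle `◇_κ(E)`. -/
def DiamondK (E : Set (I κ)) : Prop :=
  ∃ s : I κ → Set (I κ), (∀ α, s α ⊆ Iio α) ∧
    ∀ X : Set (I κ), IsStatK κ {α | α ∈ E ∧ X ∩ Iio α = s α}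

/-- The guessing principle `◇_κ(E, 2^κ, NS_κ)`. -/
def DiamondFunK (E : Set (I κ)) : Prop :=
  ∃ s : I κ → Sp κ Bool,
    ∀ x : Sp κ Bool, IsStatK κ {α | α ∈ E ∧ ∀ β < α, x β = s α β}

/-- `S` is `X`-small. -/
def XSmall (X : Set (I κ)) (S : Set (Sp κ A)) : Prop :=
  ∃ a : I κ → Sp κ A, S ⊆ ⋃ α ∈ X, cyl κ A (a α) α

/-- `S` is small in `A^κ`. -/
def SmallK (S : Set (Sp κ A)) : Prop :=
  ∃ lam : Cardinal, lam < κ ∧ ∀ α : I κ, ∃ T : Set (Sp κ A),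
    #T ≤ lam ∧ S ⊆ ⋃ x ∈ T, cyl κ A x α



section LusinAux

variable {κ : Cardinal.{0}}

instance instIsWellOrderToType (o : Ordinal.{0}) : IsWellOrder o.ToType (· < ·) :=
  isWellOrder_lt

lemma nonemptyI (h : κ ≠ 0) : Nonempty (I κ) := by
  refine Ordinal.toType_nonempty_iff_ne_zero.2 ?_
  intro h0
  apply h
  rw [← Cardinal.card_ord κ, h0, Ordinal.card_zero]

lemma mem_cyl_self (x : Sp κ Bool) (ξ : I κ) : x ∈ cyl κ Bool x ξ := fun _ _ => rfl

lemma cyl_eq_of_mem {x y : Sp κ Bool} {ξ : I κ} (h : y ∈ cyl κ Bool x ξ) :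
    cyl κ Bool y ξ = cyl κ Bool x ξ := by
  ext z
  constructor <;> intro hz β hβ
  · exact (hz β hβ).trans (h β hβ)
  · exact (hz β hβ).trans (h β hβ).symm

lemma cyl_open (x : Sp κ Bool) (ξ : I κ) : OpenK κ Bool (cyl κ Bool x ξ) :=
  TopologicalSpace.isOpen_generateFrom_of_mem ⟨x, ξ, rfl⟩

lemma isBasisK (hk : κ ≠ 0) :
    @TopologicalSpace.IsTopologicalBasis (Sp κ Bool) (bt κ Bool)
      {S | ∃ x ξ, S = cyl κ Bool x ξ} := by
  letI : TopologicalSpace (Sp κ Bool) := bt κ Bool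
  haveI : Nonempty (I κ) := nonemptyI hk
  refine ⟨?_, ?_, rfl⟩
  · rintro t₁ ⟨x₁, ξ₁, rfl⟩ t₂ ⟨x₂, ξ₂, rfl⟩ y hy
    refine ⟨cyl κ Bool y (max ξ₁ ξ₂), ⟨y, _, rfl⟩, mem_cyl_self y _, ?_⟩
    rintro z hz
    constructor
    · intro β hβ
      exact (hz β (lt_of_lt_of_le hβ (le_max_left _ _))).trans (hy.1 β hβ)
    · intro β hβ
      exact (hz β (lt_of_lt_of_le hβ (le_max_right _ _))).trans (hy.2 β hβ)
  · apply Set.eq_univ_iff_forall.2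
    intro y
    obtain ⟨ξ⟩ := ‹Nonempty (I κ)›
    exact ⟨cyl κ Bool y ξ, ⟨y, ξ, rfl⟩, mem_cyl_self y ξ⟩

lemma nwd_mono {S T : Set (Sp κ Bool)} (hTS : T ⊆ S) (hS : NwdK κ Bool S) : NwdK κ Bool T := by
  letI : TopologicalSpace (Sp κ Bool) := bt κ Bool
  have hS' : interior (closure S) = ∅ := hS
  have : interior (closure T) ⊆ interior (closure S) :=
    interior_mono (closure_mono hTS)
  exact Set.eq_empty_iff_forall_notMem.2 fun z hz => (hS' ▸ this hz : z ∈ (∅ : Set _))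

lemma nwd_union {S T : Set (Sp κ Bool)} (hS : NwdK κ Bool S) (hT : NwdK κ Bool T) :
    NwdK κ Bool (S ∪ T) := by
  letI : TopologicalSpace (Sp κ Bool) := bt κ Bool
  have hS' : interior (closure S) = ∅ := hS
  have hT' : interior (closure T) = ∅ := hT
  show interior (closure (S ∪ T)) = ∅
  rw [closure_union]
  set U := interior (closure S ∪ closure T) with hU
  have hUopen : IsOpen U := isOpen_interior
  have h1 : U ∩ (closure T)ᶜ ⊆ closure S := by
    rintro w ⟨hw1, hw2⟩
    exact (interior_subset hw1).resolve_right hw2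
  have h2 : U ∩ (closure T)ᶜ ⊆ interior (closure S) :=
    interior_maximal h1 (hUopen.inter isClosed_closure.isOpen_compl)
  have h3 : U ⊆ closure T := by
    intro w hw
    by_contra hwT
    exact absurd (h2 ⟨hw, hwT⟩) (by rw [hS']; exact Set.notMem_empty w)
  have h4 : U ⊆ interior (closure T) := interior_maximal h3 hUopen
  rw [hT'] at h4
  exact Set.eq_empty_iff_forall_notMem.2 fun z hz => Set.notMem_empty z (h4 hz)

lemma exists_cyl_disjoint (hk : κ ≠ 0) {U : Set (Sp κ Bool)} (hU : OpenK κ Bool U)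
    (hne : U.Nonempty) {S : Set (Sp κ Bool)} (hS : NwdK κ Bool S) :
    ∃ y ξ, cyl κ Bool y ξ ⊆ U ∧ cyl κ Bool y ξ ∩ S = ∅ := by
  letI : TopologicalSpace (Sp κ Bool) := bt κ Bool
  have hS' : interior (closure S) = ∅ := hS
  have hnotsub : ¬ U ⊆ closure S := by
    intro hsub
    obtain ⟨u, hu⟩ := hne
    exact absurd (interior_maximal hsub hU hu) (by rw [hS']; exact Set.notMem_empty u)
  obtain ⟨y, hyU, hyS⟩ := Set.not_subset.1 hnotsub
  have hopen : IsOpen (U ∩ (closure S)ᶜ) := hU.inter isClosed_closure.isOpen_compl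
  obtain ⟨V, ⟨x, ξ, rfl⟩, hyV, hVsub⟩ :=
    (isBasisK hk).isOpen_iff.1 hopen y ⟨hyU, hyS⟩
  refine ⟨y, ξ, ?_, ?_⟩
  · rw [cyl_eq_of_mem hyV]
    exact fun z hz => (hVsub hz).1
  · rw [cyl_eq_of_mem hyV]
    apply Set.eq_empty_iff_forall_notMem.2
    rintro z ⟨hz1, hz2⟩
    exact (hVsub hz1).2 (subset_closure hz2)

lemma singleton_nwd (hk : ℵ₀ < κ) (x : Sp κ Bool) : NwdK κ Bool ({x} : Set (Sp κ Bool)) := by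
  letI : TopologicalSpace (Sp κ Bool) := bt κ Bool
  haveI : NoMaxOrder (I κ) := Cardinal.noMaxOrder hk.le
  have hk0 : κ ≠ 0 := (aleph0_pos.trans hk).ne'
  have hcl : closure ({x} : Set (Sp κ Bool)) ⊆ {x} := by
    intro z hz
    have hzx : z = x := by
      funext β
      obtain ⟨ξ, hξ⟩ := exists_gt β
      obtain ⟨w, hw1, hw2⟩ := mem_closure_iff.1 hz (cyl κ Bool z ξ) (cyl_open z ξ)
        (mem_cyl_self z ξ)
      have hwx : w = x := hw2
      rw [← hwx, hw1 β hξ]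
    exact hzx
  show interior (closure ({x} : Set (Sp κ Bool))) = ∅
  have hmono : interior (closure ({x} : Set (Sp κ Bool))) ⊆ interior {x} :=
    interior_mono hcl
  have hint : interior ({x} : Set (Sp κ Bool)) = ∅ := by
    apply Set.eq_empty_iff_forall_notMem.2
    intro y hy
    obtain ⟨V, ⟨x', ξ, rfl⟩, hyV, hVsub⟩ :=
      (isBasisK hk0).isOpen_iff.1 isOpen_interior y hy
    have hsub : cyl κ Bool y ξ ⊆ {x} := by
      rw [cyl_eq_of_mem hyV]
      exact hVsub.trans interior_subset
    have hy' : y = x := hsub (mem_cyl_self y ξ)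
    have hmem : Function.update y ξ (!(y ξ)) ∈ cyl κ Bool y ξ := by
      intro β hβ
      exact Function.update_of_ne (ne_of_lt hβ) _ y
    have : Function.update y ξ (!(y ξ)) = x := hsub hmem
    have hξval : Function.update y ξ (!(y ξ)) ξ = y ξ := by rw [this, ← hy']
    rw [Function.update_self] at hξval
    exact Bool.not_ne_self (y ξ) hξval
  exact Set.eq_empty_iff_forall_notMem.2 fun z hz => (hint ▸ hmono hz : z ∈ (∅ : Set _))

lemma meagre_singleton (hk : ℵ₀ < κ) (x : Sp κ Bool) :
    MeagreK κ Bool ({x} : Set (Sp κ Bool)) := by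
  haveI : Nonempty (I κ) := nonemptyI (aleph0_pos.trans hk).ne'
  exact ⟨fun _ => {x}, fun _ => singleton_nwd hk x, (Set.iUnion_const _).symm⟩

lemma meagre_union_singleton (hk : ℵ₀ < κ) {S : Set (Sp κ Bool)} (hS : MeagreK κ Bool S)
    (x : Sp κ Bool) : MeagreK κ Bool (S ∪ {x}) := by
  haveI : Nonempty (I κ) := nonemptyI (aleph0_pos.trans hk).ne'
  obtain ⟨f, hf, rfl⟩ := hS
  refine ⟨fun i => f i ∪ {x}, fun i => nwd_union (hf i) (singleton_nwd hk x), ?_⟩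
  rw [Set.iUnion_union_distrib, Set.iUnion_const]

lemma exists_ub (hreg : κ.IsRegular) {ι : Type} (hι : #ι < κ) (f : ι → I κ) :
    ∃ b : I κ, ∀ i, f i ≤ b := by
  set o : Ordinal := Ordinal.lsub (fun i => Ordinal.typein ((· < ·) : I κ → I κ → Prop) (f i))
    with ho
  have hlsub : o < κ.ord := by
    apply Ordinal.lsub_lt_ord
    · rw [hreg.cof_eq]; exact hι
    · intro i; exact Ordinal.typein_lt_self (f i)
  have hlt : o < Ordinal.type ((· < ·) : I κ → I κ → Prop) := by
    rw [Ordinal.type_toType]; exact hlsub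
  refine ⟨Ordinal.enum ((· < ·) : I κ → I κ → Prop) ⟨o, hlt⟩, fun i => le_of_lt ?_⟩
  apply (Ordinal.typein_lt_typein ((· < ·) : I κ → I κ → Prop)).1
  rw [Ordinal.typein_enum]
  exact Ordinal.lt_lsub _ i

/-- Coherence of a partial run of the Baire recursion. -/
def Coh (κ : Cardinal.{0}) (α : I κ) (h : ∀ β, β < α → Sp κ Bool × I κ) : Prop :=
  ∀ β (hβ : β < α), ∀ γ (hγ : γ < α), β < γ →
    ∀ i, i < (h β hβ).2 → (h γ hγ).1 i = (h β hβ).1 i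

lemma step_ex (hk : ℵ₀ < κ) (hreg : κ.IsRegular) {N : Set (Sp κ Bool)}
    (hN : NwdK κ Bool N) (α : I κ) (h : ∀ β, β < α → Sp κ Bool × I κ) :
    ∃ y : Sp κ Bool × I κ,
      (Coh κ α h → ∀ β (hβ : β < α), ∀ i, i < (h β hβ).2 → y.1 i = (h β hβ).1 i) ∧
      cyl κ Bool y.1 y.2 ∩ N = ∅ := by
  classical
  have hk0 : κ ≠ 0 := (aleph0_pos.trans hk).ne'
  by_cases hcoh : Coh κ α h
  · have hpair : ∀ β₁ (hβ₁ : β₁ < α), ∀ β₂ (hβ₂ : β₂ < α), ∀ i,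
        i < (h β₁ hβ₁).2 → i < (h β₂ hβ₂).2 → (h β₁ hβ₁).1 i = (h β₂ hβ₂).1 i := by
      intro β₁ hβ₁ β₂ hβ₂ i h1 h2
      rcases lt_trichotomy β₁ β₂ with hlt | heq | hgt
      · exact (hcoh β₁ hβ₁ β₂ hβ₂ hlt i h1).symm
      · subst heq; rfl
      · exact hcoh β₂ hβ₂ β₁ hβ₁ hgt i h2
    let xb : Sp κ Bool := fun i =>
      if hc : ∃ β, ∃ hβ : β < α, i < (h β hβ).2
      then (h hc.choose hc.choose_spec.choose).1 i else false
    have agree : ∀ β (hβ : β < α), ∀ i, i < (h β hβ).2 → xb i = (h β hβ).1 i := by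
      intro β hβ i hi
      have hc : ∃ β', ∃ hβ' : β' < α, i < (h β' hβ').2 := ⟨β, hβ, hi⟩
      show (if hc2 : ∃ β', ∃ hβ' : β' < α, i < (h β' hβ').2
        then (h hc2.choose hc2.choose_spec.choose).1 i else false) = (h β hβ).1 i
      rw [dif_pos hc]
      exact hpair _ _ _ _ i hc.choose_spec.choose_spec hi
    obtain ⟨b, hb⟩ := exists_ub hreg
      (ι := {β : I κ // β < α}) (Cardinal.mk_Iio_ord_toType α)
      (fun p => (h p.1 p.2).2)
    obtain ⟨y, ξ, hsubU, hdisj⟩ := exists_cyl_disjoint hk0 (cyl_open xb b)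
      ⟨xb, mem_cyl_self xb b⟩ hN
    refine ⟨(y, ξ), fun _ β hβ i hi => ?_, hdisj⟩
    have hy : y ∈ cyl κ Bool xb b := hsubU (mem_cyl_self y ξ)
    have hib : i < b := lt_of_lt_of_le hi (hb ⟨β, hβ⟩)
    exact (hy i hib).trans (agree β hβ i hi)
  · obtain ⟨y, ξ, -, hdisj⟩ := exists_cyl_disjoint hk0
      (U := Set.univ) (@isOpen_univ _ (bt κ Bool)) Set.univ_nonempty hN
    exact ⟨(y, ξ), fun hc => absurd hc hcoh, hdisj⟩

theorem baireK (hk : ℵ₀ < κ) (hreg : κ.IsRegular) (N : I κ → Set (Sp κ Bool))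
    (hN : ∀ i, NwdK κ Bool (N i)) : ∃ z : Sp κ Bool, ∀ i, z ∉ N i := by
  classical
  have wf : WellFounded ((· < ·) : I κ → I κ → Prop) := IsWellFounded.wf
  set g : I κ → Sp κ Bool × I κ := WellFounded.fix wf
    (fun α ih => Classical.choose (step_ex hk hreg (hN α) α (fun β hβ => ih β hβ))) with hg
  have geq : ∀ α, g α = Classical.choose (step_ex hk hreg (hN α) α (fun β _ => g β)) := by
    intro α
    exact WellFounded.fix_eq wf _ α
  have inv : ∀ α β, β < α → ∀ i, i < (g β).2 → (g α).1 i = (g β).1 i := by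
    intro α
    refine wf.induction (C := fun α => ∀ β, β < α → ∀ i, i < (g β).2 → (g α).1 i = (g β).1 i)
      α ?_
    intro α IH β hβ i hi
    have hcoh : Coh κ α (fun β _ => g β) :=
      fun β₁ hβ₁ β₂ hβ₂ hlt j hj => IH β₂ hβ₂ β₁ hlt j hj
    have spec := Classical.choose_spec (step_ex hk hreg (hN α) α (fun β _ => g β))
    rw [geq α]
    exact spec.1 hcoh β hβ i hi
  have gdisj : ∀ α, cyl κ Bool (g α).1 (g α).2 ∩ N α = ∅ := by
    intro α
    have spec := Classical.choose_spec (step_ex hk hreg (hN α) α (fun β _ => g β))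
    rw [geq α]
    exact spec.2
  let z : Sp κ Bool := fun i =>
    if hc : ∃ α, i < (g α).2 then (g hc.choose).1 i else false
  have hzmem : ∀ α, z ∈ cyl κ Bool (g α).1 (g α).2 := by
    intro α i hi
    have hc : ∃ α', i < (g α').2 := ⟨α, hi⟩
    show (if hc2 : ∃ α', i < (g α').2 then (g hc2.choose).1 i else false) = (g α).1 i
    rw [dif_pos hc]
    rcases lt_trichotomy hc.choose α with hlt | heq | hgt
    · exact (inv α hc.choose hlt i hc.choose_spec).symm
    · rw [heq]
    · exact inv hc.choose α hgt i hi
  refine ⟨z, fun α hzα => ?_⟩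
  exact Set.eq_empty_iff_forall_notMem.1 (gdisj α) z ⟨hzmem α, hzα⟩

end LusinAux

theorem stmt0 (κ lam : Cardinal.{0}) (hk : Cardinal.aleph0 < κ) (hreg : κ.IsRegular) (hpow : κ ^< κ = κ)
    (hcov : lam = covM κ Bool) (hcof : lam = cofM κ Bool) :
    ∃ L : Set (Sp κ Bool), lam ≤ #L ∧ ∀ X, MeagreK κ Bool X → #↥(L ∩ X) < lam := by
  classical
  have hk0 : κ ≠ 0 := (aleph0_pos.trans hk).ne'
  haveI hIne : Nonempty (I κ) := nonemptyI hk0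
  -- the covering number set is nonempty (singletons cover)
  have hcovne : {c | ∃ 𝒜 : Set (Set (Sp κ Bool)), #𝒜 = c ∧ (∀ s ∈ 𝒜, MeagreK κ Bool s) ∧
      ⋃₀ 𝒜 = Set.univ}.Nonempty := by
    refine ⟨_, Set.range (fun x : Sp κ Bool => ({x} : Set (Sp κ Bool))), rfl, ?_, ?_⟩
    · rintro s ⟨x, rfl⟩
      exact meagre_singleton hk x
    · apply Set.eq_univ_iff_forall.2
      intro z
      exact ⟨{z}, ⟨z, rfl⟩, rfl⟩
  have hlam_cov : ∃ 𝒜 : Set (Set (Sp κ Bool)), #𝒜 = lam ∧ (∀ s ∈ 𝒜, MeagreK κ Bool s) ∧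
      ⋃₀ 𝒜 = Set.univ := by
    rw [hcov]
    exact csInf_mem hcovne
  -- κ < lam via the Baire category theorem
  have hkl : κ < lam := by
    by_contra hle
    push_neg at hle
    obtain ⟨𝒜, h𝒜, hmeag, hcover⟩ := hlam_cov
    choose f hf hfu using fun s : ↥𝒜 => hmeag s s.2
    haveI h𝒜ne : Nonempty ↥𝒜 := by
      by_contra hemp
      rw [not_nonempty_iff] at hemp
      rw [Set.isEmpty_coe_sort.1 hemp, Set.sUnion_empty] at hcover
      exact Set.eq_empty_iff_forall_notMem.1 hcover.symm
        (Classical.arbitrary (Sp κ Bool)) trivial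
    have hIcard : #(I κ) = κ := by rw [Cardinal.mk_toType, Cardinal.card_ord]
    have hcard : #(↥𝒜 × I κ) ≤ #(I κ) := by
      rw [Cardinal.mk_prod, Cardinal.lift_id, Cardinal.lift_id, h𝒜, hIcard]
      calc lam * κ ≤ κ * κ := by
            exact mul_le_mul' hle le_rfl
        _ = κ := Cardinal.mul_eq_self hk.le
    obtain ⟨emb⟩ := Cardinal.le_def (↥𝒜 × I κ) (I κ) |>.1 hcard
    have hσ : Function.Surjective (Function.invFun emb) :=
      Function.invFun_surjective emb.injective
    obtain ⟨z, hz⟩ := baireK hk hreg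
      (fun i => f (Function.invFun emb i).1 (Function.invFun emb i).2)
      (fun i => hf _ _)
    have hzmem : z ∈ ⋃₀ 𝒜 := hcover.symm ▸ Set.mem_univ z
    obtain ⟨s, hs𝒜, hzs⟩ := hzmem
    have : z ∈ ⋃ i, f ⟨s, hs𝒜⟩ i := by rw [← hfu ⟨s, hs𝒜⟩]; exact hzs
    obtain ⟨i, hi⟩ := Set.mem_iUnion.1 this
    obtain ⟨j, hj⟩ := hσ (⟨s, hs𝒜⟩, i)
    exact hz j (by rw [hj]; exact hi)
  have hlaminf : ℵ₀ < lam := hk.trans hkl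
  -- a cofinal family of size lam
  have hcofne : {c | ∃ 𝒜 : Set (Set (Sp κ Bool)), #𝒜 = c ∧ (∀ s ∈ 𝒜, MeagreK κ Bool s) ∧
      ∀ t, MeagreK κ Bool t → ∃ s ∈ 𝒜, t ⊆ s}.Nonempty :=
    ⟨_, {s | MeagreK κ Bool s}, rfl, fun _ hs => hs, fun t ht => ⟨t, ht, subset_rfl⟩⟩
  obtain ⟨𝒜c, h𝒜c, hmc, hcofin⟩ : ∃ 𝒜 : Set (Set (Sp κ Bool)), #𝒜 = lam ∧
      (∀ s ∈ 𝒜, MeagreK κ Bool s) ∧ ∀ t, MeagreK κ Bool t → ∃ s ∈ 𝒜, t ⊆ s := by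
    rw [hcof]
    exact csInf_mem hcofne
  have hJcard : #(I lam) = lam := by rw [Cardinal.mk_toType, Cardinal.card_ord]
  obtain ⟨e⟩ : Nonempty (I lam ≃ ↥𝒜c) := Cardinal.eq.1 (hJcard.trans h𝒜c.symm)
  set M : I lam → Set (Sp κ Bool) := fun j => (e j : Set (Sp κ Bool)) with hM
  have hMmeag : ∀ j, MeagreK κ Bool (M j) := fun j => hmc _ (e j).2
  have hMcof : ∀ t, MeagreK κ Bool t → ∃ j, t ⊆ M j := by
    intro t ht
    obtain ⟨s, hs, hsub⟩ := hcofin t ht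
    refine ⟨e.symm ⟨s, hs⟩, ?_⟩
    rw [hM]
    simpa [Equiv.apply_symm_apply] using hsub
  -- transfinite construction of the Lusin set
  have wfJ : WellFounded ((· < ·) : I lam → I lam → Prop) := IsWellFounded.wf
  have hstep : ∀ (α : I lam) (h : ∀ β, β < α → Sp κ Bool),
      ∃ y : Sp κ Bool, ∀ β (hβ : β < α), y ∉ M β ∧ y ≠ h β hβ := by
    intro α h
    by_contra hcon
    push_neg at hcon
    have hcover' : ⋃₀ (Set.range (fun p : {β : I lam // β < α} =>
        M p.1 ∪ {h p.1 p.2})) = Set.univ := by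
      apply Set.eq_univ_iff_forall.2
      intro y
      obtain ⟨β, hβ, hy⟩ := hcon y
      refine ⟨M β ∪ {h β hβ}, ⟨⟨β, hβ⟩, rfl⟩, ?_⟩
      by_cases hyM : y ∈ M β
      · exact Or.inl hyM
      · exact Or.inr (hy hyM)
    have hmeag' : ∀ s ∈ Set.range (fun p : {β : I lam // β < α} =>
        M p.1 ∪ {h p.1 p.2}), MeagreK κ Bool s := by
      rintro s ⟨p, rfl⟩
      exact meagre_union_singleton hk (hMmeag p.1) _
    have hlt : #↥(Set.range (fun p : {β : I lam // β < α} => M p.1 ∪ {h p.1 p.2})) < lam :=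
      lt_of_le_of_lt Cardinal.mk_range_le (Cardinal.mk_Iio_ord_toType α)
    have hge : lam ≤ #↥(Set.range (fun p : {β : I lam // β < α} => M p.1 ∪ {h p.1 p.2})) :=
      hcov.trans_le (csInf_le' ⟨_, rfl, hmeag', hcover'⟩)
    exact absurd (hge.trans_lt hlt) (lt_irrefl _)
  set x : I lam → Sp κ Bool := WellFounded.fix wfJ
    (fun α ih => Classical.choose (hstep α (fun β hβ => ih β hβ))) with hx
  have xeq : ∀ α, x α = Classical.choose (hstep α (fun β _ => x β)) := by
    intro α
    exact WellFounded.fix_eq wfJ _ α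
  have xspec : ∀ α β (hβ : β < α), x α ∉ M β ∧ x α ≠ x β := by
    intro α β hβ
    have := Classical.choose_spec (hstep α (fun β _ => x β)) β hβ
    rw [xeq α]
    exact this
  have xinj : Function.Injective x := by
    intro a b hab
    rcases lt_trichotomy a b with hlt | heq | hgt
    · exact absurd hab.symm (xspec b a hlt).2
    · exact heq
    · exact absurd hab (xspec a b hgt).2
  refine ⟨Set.range x, ?_, ?_⟩
  · rw [Cardinal.mk_range_eq x xinj, hJcard]
  · intro X hX
    obtain ⟨j, hj⟩ := hMcof X hX
    have hsub : (Set.range x ∩ X : Set (Sp κ Bool)) ⊆ x '' Set.Iic j := by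
      rintro w ⟨⟨a, rfl⟩, hwX⟩
      refine ⟨a, ?_, rfl⟩
      by_contra hgt
      rw [Set.mem_Iic, not_le] at hgt
      exact (xspec a j hgt).1 (hj hwX)
    calc #↥(Set.range x ∩ X) ≤ #↥(x '' Set.Iic j) := Cardinal.mk_le_mk_of_subset hsub
      _ ≤ #↥(Set.Iic j) := Cardinal.mk_image_le
      _ ≤ #↥(Set.Iio j) + 1 := by rw [← Set.Iio_insert]; exact Cardinal.mk_insert_le
      _ < lam := Cardinal.add_lt_of_lt hlaminf.le (Cardinal.mk_Iio_ord_toType j)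
          (Cardinal.one_lt_aleph0.trans hlaminf)

end GenSp
end
end

section
/- Let κ be a strongly inaccessible cardinal. For every X ∈ [κ]^κ, the set A_X = {x ∈ 2^κ : x(α)=0 for all α ∈ κ∖X} is a closed subset of 2^κ which is not κ-strongly null. -/
noncomputable section

open Cardinal Set

namespace GenSp

variable (κ : Cardinal.{0}) (A : Type)

theorem stmt4 (κ : Cardinal.{0}) (hinacc : κ.IsInaccessible)
    (X : Set (I κ)) (hX : #X = κ) :
    ClosedK κ Bool {x : Sp κ Bool | ∀ α ∉ X, x α = false} ∧
      ¬ SNullK κ Bool {x : Sp κ Bool | ∀ α ∉ X, x α = false} := by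
  have hℵ₀ : ℵ₀ ≤ κ := hinacc.1.le
  have hnomax : NoMaxOrder (I κ) := Cardinal.noMaxOrder hℵ₀
  -- successor function
  have hsucc : ∀ a : I κ, ∃ b : I κ, a < b := fun a => exists_gt a
  choose succ hsucclt using hsucc
  constructor
  · -- closed
    rw [ClosedK]
    rw [← @isOpen_compl_iff _ _ (bt κ Bool)]
    have : ({x : Sp κ Bool | ∀ α ∉ X, x α = false}ᶜ : Set (Sp κ Bool)) =
        ⋃ x ∈ {x : Sp κ Bool | ∀ α ∉ X, x α = false}ᶜ,
          ⋃ α ∈ {α | α ∉ X ∧ x α = true}, cyl κ Bool x (succ α) := by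
      ext y
      simp only [mem_compl_iff, mem_setOf_eq, mem_iUnion]
      constructor
      · intro hy
        push_neg at hy
        obtain ⟨α, hα, hval⟩ := hy
        exact ⟨y, by push_neg; exact ⟨α, hα, hval⟩, α,
          ⟨hα, by simpa using hval⟩, fun β _ => rfl⟩
      · rintro ⟨x, -, α, ⟨hα, hx⟩, hy⟩
        push_neg
        exact ⟨α, hα, by rw [hy α (hsucclt α), hx]; simp⟩
    rw [this]
    refine @isOpen_biUnion _ _ (bt κ Bool) _ _ fun x _ => ?_
    refine @isOpen_biUnion _ _ (bt κ Bool) _ _ fun α _ => ?_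
    exact TopologicalSpace.GenerateOpen.basic _ ⟨x, succ α, rfl⟩
  · -- not strongly null
    intro hSN
    -- injection e : I κ → X
    have hcard : #(I κ) = #X := by rw [hX, mk_toType, Cardinal.card_ord]
    obtain ⟨e⟩ := Cardinal.eq.1 hcard
    set ξ : I κ → I κ := fun α => succ (e α : I κ) with hξ
    obtain ⟨a, ha⟩ := hSN ξ
    classical
    -- build x ∈ A avoiding all cylinders
    set x : Sp κ Bool := fun β =>
      if h : ∃ α, (e α : I κ) = β then !(a h.choose (e h.choose : I κ)) else false
      with hxdef
    have hxmem : x ∈ {x : Sp κ Bool | ∀ α ∉ X, x α = false} := by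
      intro β hβ
      rw [hxdef]
      simp only
      rw [dif_neg]
      rintro ⟨α, rfl⟩
      exact hβ (e α).2
    have := ha hxmem
    simp only [mem_iUnion] at this
    obtain ⟨α, hα⟩ := this
    have hval := hα (e α : I κ) (hsucclt _)
    have hx : x (e α : I κ) = !(a α (e α : I κ)) := by
      rw [hxdef]
      simp only
      have hex : ∃ α', (e α' : I κ) = (e α : I κ) := ⟨α, rfl⟩
      rw [dif_pos hex]
      have : hex.choose = α := by
        have := hex.choose_spec
        exact Subtype.val_injective this |> e.injective
      rw [this]
    rw [hx] at hval
    simp at hval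

end GenSp
end
end

section
/- Let κ be an uncountable regular cardinal with κ^{<κ}=κ. If A ⊆ 2^κ has the property that for every nowhere dense set F ⊆ 2^κ there exists x ∈ 2^κ with (x + A) ∩ F = ∅, then A is κ-strongly null. -/
noncomputable section

open Cardinal Set

namespace GenSp

variable (κ : Cardinal.{0}) (A : Type)

lemma cyl_mono {x : Sp κ A} {ξ ξ' : I κ} (h : ξ ≤ ξ') :
    cyl κ A x ξ' ⊆ cyl κ A x ξ := fun y hy β hβ => hy β (lt_of_lt_of_le hβ h)

lemma open_contains_cyl [Nonempty (I κ)] {u : Set (Sp κ A)} (hu : OpenK κ A u) :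
    ∀ a ∈ u, ∃ ξ, cyl κ A a ξ ⊆ u := by
  induction hu with
  | basic s hs =>
    intro a ha
    obtain ⟨x, ξ, rfl⟩ := hs
    exact ⟨ξ, fun y hy β hβ => (hy β hβ).trans (ha β hβ)⟩
  | univ => exact fun a _ => ⟨Classical.arbitrary _, by simp⟩
  | inter u v _ _ ihu ihv =>
    intro a ha
    obtain ⟨ξ₁, h₁⟩ := ihu a ha.1
    obtain ⟨ξ₂, h₂⟩ := ihv a ha.2
    exact ⟨max ξ₁ ξ₂, fun y hy =>
      ⟨h₁ (cyl_mono κ A (le_max_left _ _) hy), h₂ (cyl_mono κ A (le_max_right _ _) hy)⟩⟩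
  | sUnion S _ ih =>
    intro a ha
    obtain ⟨s, hs, has⟩ := ha
    obtain ⟨ξ, hξ⟩ := ih s hs a has
    exact ⟨ξ, fun y hy => ⟨s, hs, hξ hy⟩⟩


theorem stmt5 (κ : Cardinal.{0}) (hk : Cardinal.aleph0 < κ) (hreg : κ.IsRegular) (hpow : κ ^< κ = κ)
    (S : Set (Sp κ Bool))
    (h : ∀ F, NwdK κ Bool F → ∃ x, (xadd κ x '' S) ∩ F = ∅) :
    SNullK κ Bool S := by
  have hκ0 : κ ≠ 0 := (aleph0_pos.trans hk).ne'
  have hne : Nonempty (I κ) := Ordinal.toType_nonempty_iff_ne_zero.2 (by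
    simpa using hκ0)
  intro ξ
  -- the representative map
  set r : Sp κ Bool × I κ → Sp κ Bool × I κ :=
    fun p => (fun β => if β < p.2 then p.1 β else false, p.2) with hr
  -- cardinality of the range
  have hcard : #(Set.range r) ≤ κ := by
    set m : (Σ ζ : I κ, (Iio ζ → Bool)) → Sp κ Bool × I κ :=
      fun s => (fun β => if h : β < s.1 then s.2 ⟨β, h⟩ else false, s.1) with hm
    have hmem : ∀ s, m s ∈ Set.range r := by
      rintro ⟨η, f⟩
      refine ⟨((fun β => if h : β < η then f ⟨β, h⟩ else false), η), ?_⟩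
      simp only [hr, hm]
      refine Prod.ext ?_ rfl
      funext β
      by_cases hβ : β < η <;> simp [hβ]
    have hsurj : Function.Surjective (fun s => (⟨m s, hmem s⟩ : Set.range r)) := by
      rintro ⟨p, ⟨⟨a, η⟩, rfl⟩⟩
      refine ⟨⟨η, fun β => a β.1⟩, ?_⟩
      refine Subtype.ext ?_
      simp only [hm, hr]
      refine Prod.ext ?_ rfl
      funext β
      by_cases hβ : β < η <;> simp [hβ]
    have h1 : #(Set.range r) ≤ #(Σ ζ : I κ, (Iio ζ → Bool)) :=
      Cardinal.mk_le_of_surjective hsurj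
    refine h1.trans ?_
    rw [mk_sigma]
    have hbound : ∀ ζ : I κ, #(Iio ζ → Bool) ≤ κ := by
      intro ζ
      have h2 : #(Iio ζ → Bool) = (2 : Cardinal) ^ #(Iio ζ) := by
        rw [← mk_bool, power_def]
      rw [h2]
      calc (2 : Cardinal) ^ #(Iio ζ) ≤ κ ^ #(Iio ζ) :=
            power_le_power_right ((nat_lt_aleph0 2).le.trans hk.le)
        _ ≤ κ ^< κ := le_powerlt κ (mk_Iio_ord_toType ζ)
        _ = κ := hpow
    calc Cardinal.sum (fun ζ : I κ => #(Iio ζ → Bool))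
        ≤ Cardinal.sum (fun _ : I κ => κ) := Cardinal.sum_le_sum _ _ hbound
      _ = #(I κ) * κ := by rw [Cardinal.sum_const']
      _ = κ * κ := by rw [mk_ord_toType]
      _ = κ := mul_eq_self hk.le
  -- a surjection onto the range
  have hcard' : #(Set.range r) ≤ #(I κ) := hcard.trans_eq (mk_ord_toType κ).symm
  haveI : Nonempty (Set.range r) := ⟨⟨r ((fun _ => false), Classical.arbitrary _), Set.mem_range_self _⟩⟩
  obtain ⟨f⟩ := Cardinal.le_def _ _ |>.1 hcard' 
  have hsurj : Function.Surjective (Function.invFun f) :=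
    Function.invFun_surjective f.injective
  set c : I κ → Sp κ Bool := fun α => (Function.invFun f α).1.1 with hc
  set w : I κ → I κ := fun α => (Function.invFun f α).1.2 with hw
  set ζ : I κ → I κ := fun α => max (ξ α) (w α) with hζ
  set U : Set (Sp κ Bool) := ⋃ α, cyl κ Bool (c α) (ζ α) with hU
  -- key property: representatives appear
  have hrep : ∀ (a : Sp κ Bool) (η : I κ), ∃ α, w α = η ∧ ∀ β < η, c α β = a β := by
    intro a η
    obtain ⟨α, hα⟩ := hsurj ⟨r (a, η), Set.mem_range_self _⟩
    refine ⟨α, ?_, ?_⟩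
    · show (↑(Function.invFun (⇑f) α) : Sp κ Bool × I κ).2 = η
      rw [hα]
    · intro β hβ
      show (↑(Function.invFun (⇑f) α) : Sp κ Bool × I κ).1 β = a β
      rw [hα]
      show (if β < η then a β else false) = a β
      rw [if_pos hβ]
  letI : TopologicalSpace (Sp κ Bool) := bt κ Bool
  have hUopen : IsOpen U := by
    refine isOpen_iUnion fun α => ?_
    exact TopologicalSpace.GenerateOpen.basic _ ⟨c α, ζ α, rfl⟩
  have hF : NwdK κ Bool Uᶜ := by
    show interior (closure Uᶜ) = ∅
    rw [(hUopen.isClosed_compl).closure_eq]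
    rw [Set.eq_empty_iff_forall_notMem]
    intro a ha
    have hopen : OpenK κ Bool (interior Uᶜ) := isOpen_interior
    obtain ⟨η, hη⟩ := open_contains_cyl κ Bool hopen a ha
    obtain ⟨α, hwα, hcα⟩ := hrep a η
    have h1 : c α ∈ cyl κ Bool a η := fun β hβ => hcα β hβ
    have h2 : c α ∈ U := ⟨_, ⟨α, rfl⟩, fun β _ => rfl⟩
    exact (interior_subset (hη h1)) h2
  obtain ⟨x, hx⟩ := h Uᶜ hF
  refine ⟨fun α => xadd κ x (c α), fun s hs => ?_⟩
  have h1 : xadd κ x s ∈ U := by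
    by_contra h2
    exact (Set.eq_empty_iff_forall_notMem.1 hx (xadd κ x s)) ⟨⟨s, hs, rfl⟩, h2⟩
  obtain ⟨_, ⟨α, rfl⟩, h3⟩ := h1
  refine Set.mem_iUnion.2 ⟨α, fun β hβ => ?_⟩
  have h4 : xadd κ x s β = c α β := h3 β (lt_of_lt_of_le hβ (le_max_left _ _))
  show s β = xor (x β) (c α β)
  rw [← h4]
  show s β = xor (x β) (xor (x β) (s β))
  cases x β <;> cases s β <;> rfl
end GenSp
end
end

section
/- Let κ be an uncountable regular cardinal with κ^{<κ}=κ. Every subset A of 2^κ with |A| < cov(M_κ) is κ-strongly null. -/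
noncomputable section

open Cardinal Set

namespace GenSp

variable (κ : Cardinal.{0}) (A : Type)

lemma auxBounded (hreg : κ.IsRegular) (s : Set (I κ)) (h : #s < κ) :
    ∃ a : I κ, ∀ b ∈ s, b < a := by
  by_contra hc
  have hcof : IsCofinal s := by
    by_contra h'
    exact hc (not_isCofinal_iff.1 h')
  have := Order.cof_le hcof
  rw [Ordinal.cof_toType, hreg.cof_ord] at this
  exact absurd h (not_lt.2 this)

lemma auxBasis [Nonempty (I κ)] :
    @TopologicalSpace.IsTopologicalBasis _ (bt κ A) {S | ∃ x ξ, S = cyl κ A x ξ} := by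
  refine @TopologicalSpace.IsTopologicalBasis.mk _ (bt κ A) _ ?_ ?_ rfl
  · rintro t₁ ⟨x, ξ, rfl⟩ t₂ ⟨y, ζ, rfl⟩ z hz
    refine ⟨cyl κ A z (max ξ ζ), ⟨z, _, rfl⟩, fun β _ => rfl,
      fun w hw => ⟨fun β hβ => ?_, fun β hβ => ?_⟩⟩
    · rw [hw β (lt_of_lt_of_le hβ (le_max_left _ _))]; exact hz.1 β hβ
    · rw [hw β (lt_of_lt_of_le hβ (le_max_right _ _))]; exact hz.2 β hβ
  · apply eq_univ_of_forall
    intro z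
    exact mem_sUnion.2 ⟨cyl κ A z (Classical.arbitrary _), ⟨z, _, rfl⟩, fun β _ => rfl⟩

lemma auxCylOpen (x : Sp κ A) (ξ : I κ) : OpenK κ A (cyl κ A x ξ) :=
  TopologicalSpace.isOpen_generateFrom_of_mem ⟨x, ξ, rfl⟩

lemma auxNwd {X : Type} [T : TopologicalSpace X] {B : Set (Set X)}
    (hB : TopologicalSpace.IsTopologicalBasis B) {s : Set X} (hs : IsClosed s)
    (h : ∀ b ∈ B, b.Nonempty → (b ∩ sᶜ).Nonempty) : IsNowhereDense s := by
  rw [hs.isNowhereDense_iff]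
  rw [eq_empty_iff_forall_notMem]
  intro z hz
  obtain ⟨b, hbB, hzb, hbs⟩ := hB.exists_subset_of_mem_open hz isOpen_interior
  obtain ⟨w, hw1, hw2⟩ := h b hbB ⟨z, hzb⟩
  exact hw2 (interior_subset (hbs hw1))

theorem stmt7 (κ : Cardinal.{0}) (hk : Cardinal.aleph0 < κ) (hreg : κ.IsRegular) (hpow : κ ^< κ = κ)
    (S : Set (Sp κ Bool)) (hS : #S < covM κ Bool) :
    SNullK κ Bool S := by
  classical
  intro ξ
  have hI : #(I κ) = κ := Cardinal.mk_ord_toType κ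
  haveI : Nonempty (I κ) := by
    rw [← Cardinal.mk_ne_zero_iff, hI]
    exact (hreg.pos).ne'
  obtain ⟨p⟩ : Nonempty (I κ × I κ ≃ I κ) := by
    rw [← Cardinal.eq]
    simp [hI, Cardinal.mul_eq_self hk.le]
  set M : Sp κ Bool → Set (Sp κ Bool) :=
    fun x => {z | ∀ α, ∃ β, β < ξ α ∧ z (p (α, β)) ≠ x β} with hM
  -- blocks beyond any bound
  have hblock : ∀ ζ : I κ, ∃ α : I κ, ∀ β : I κ, ¬ p (α, β) < ζ := by
    intro ζ
    by_contra hc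
    push_neg at hc
    choose g hg using hc
    have hinj : Function.Injective (fun α => (⟨p (α, g α), hg α⟩ : Set.Iio ζ)) := by
      intro a b hab
      simpa using congrArg (fun u : Set.Iio ζ => (p.symm u.1).1) hab
    have h1 : #(I κ) ≤ #(Set.Iio ζ) := Cardinal.mk_le_of_injective hinj
    rw [hI] at h1
    exact absurd (h1.trans_lt (Cardinal.mk_Iio_ord_toType ζ)) (lt_irrefl _)
  -- each M x is nowhere dense
  have hnwd : ∀ x, NwdK κ Bool (M x) := by
    intro x
    have hopen : OpenK κ Bool (M x)ᶜ := by
      have hc : (M x)ᶜ = ⋃ α : I κ, {z : Sp κ Bool | ∀ β, β < ξ α → z (p (α, β)) = x β} := by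
        ext z
        simp only [hM, mem_compl_iff, mem_setOf_eq, mem_iUnion, not_forall]
        constructor
        · rintro ⟨α, hα⟩; push_neg at hα
          exact ⟨α, fun β hβ => hα β hβ⟩
        · rintro ⟨α, hα⟩
          refine ⟨α, ?_⟩
          push_neg
          exact fun β hβ => hα β hβ
      rw [OpenK, hc]
      refine @isOpen_iUnion _ _ (bt κ Bool) _ fun α => ?_
      obtain ⟨ζα, hζα⟩ := auxBounded κ hreg ((fun β => p (α, β)) '' Set.Iio (ξ α))
        ((Cardinal.mk_image_le).trans_lt (Cardinal.mk_Iio_ord_toType (ξ α)))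
      have hEq : {z : Sp κ Bool | ∀ β, β < ξ α → z (p (α, β)) = x β}
          = ⋃ z ∈ {z : Sp κ Bool | ∀ β, β < ξ α → z (p (α, β)) = x β}, cyl κ Bool z ζα := by
        apply Subset.antisymm
        · intro z hz
          exact mem_biUnion hz (fun β _ => rfl)
        · intro w hw
          rw [mem_iUnion₂] at hw
          obtain ⟨z, hz, hwz⟩ := hw
          intro β hβ
          rw [hwz _ (hζα _ ⟨β, hβ, rfl⟩)]
          exact hz β hβ
      rw [hEq]
      exact @isOpen_iUnion _ _ (bt κ Bool) _ fun z => @isOpen_iUnion _ _ (bt κ Bool) _ fun _ => auxCylOpen κ Bool z ζα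
    have hclosed : @IsClosed _ (bt κ Bool) (M x) := @IsClosed.mk _ (bt κ Bool) _ hopen
    refine auxNwd (T := bt κ Bool) (auxBasis κ Bool) hclosed ?_
    rintro b ⟨y, ζ, rfl⟩ -
    obtain ⟨α, hα⟩ := hblock ζ
    set w : Sp κ Bool := fun i =>
      if h : (p.symm i).1 = α ∧ (p.symm i).2 < ξ α then x (p.symm i).2 else y i with hw'
    refine ⟨w, ?_, ?_⟩
    · intro β hβ
      have hneg : ¬((p.symm β).1 = α ∧ (p.symm β).2 < ξ α) := by
        rintro ⟨h1, -⟩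
        have hβ' : β = p (α, (p.symm β).2) := by rw [← h1]; simp
        rw [hβ'] at hβ
        exact hα _ hβ
      exact dif_neg hneg
    · simp only [hM, mem_compl_iff, mem_setOf_eq, not_forall]
      refine ⟨α, ?_⟩
      push_neg
      intro β hβ
      simp only [hw']
      simp [hβ]
  -- not a cover
  have hnotcover : ⋃ x ∈ S, M x ≠ Set.univ := by
    intro hcov
    have hmem : #(M '' S) ∈ {c | ∃ 𝒜 : Set (Set (Sp κ Bool)), #𝒜 = c ∧
        (∀ s ∈ 𝒜, MeagreK κ Bool s) ∧ ⋃₀ 𝒜 = Set.univ} := by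
      refine ⟨M '' S, rfl, ?_, ?_⟩
      · rintro s ⟨x, _, rfl⟩
        exact ⟨fun _ => M x, fun _ => hnwd x, by rw [iUnion_const]⟩
      · rw [sUnion_image]
        exact hcov
    have h1 : covM κ Bool ≤ #(M '' S) := csInf_le' hmem
    have h2 : #(M '' S) ≤ #S := Cardinal.mk_image_le
    exact absurd ((h1.trans h2).trans_lt hS) (lt_irrefl _)
  obtain ⟨z, hz⟩ : ∃ z, z ∉ ⋃ x ∈ S, M x := by
    by_contra hc
    push_neg at hc
    exact hnotcover (eq_univ_of_forall hc)
  refine ⟨fun α β => z (p (α, β)), fun x hx => ?_⟩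
  have hzx : z ∉ M x := fun h => hz (mem_biUnion hx h)
  simp only [hM, mem_setOf_eq, not_forall] at hzx
  obtain ⟨α, hα⟩ := hzx
  push_neg at hα
  refine mem_iUnion.2 ⟨α, fun β hβ => (hα β hβ).symm⟩

end GenSp
end
end

section
/- Let κ be an uncountable regular cardinal with κ^{<κ}=κ. If A ⊆ 2^κ is κ⁺-concentrated on a set B ⊆ 2^κ with |B| ≤ κ, then A is κ-strongly null. -/
noncomputable section

open Cardinal Set

namespace GenSp

variable (κ : Cardinal.{0}) (A : Type)

theorem stmt9 (κ : Cardinal.{0}) (hk : Cardinal.aleph0 < κ) (hreg : κ.IsRegular) (hpow : κ ^< κ = κ)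
    (S B : Set (Sp κ Bool)) (hB : #B ≤ κ)
    (hconc : ∀ G, OpenK κ Bool G → B ⊆ G → #↥(S \ G) ≤ κ) :
    SNullK κ Bool S := by
  intro ξ
  have hI : #(I κ) = κ := Cardinal.mk_ord_toType κ
  have hinf : Cardinal.aleph0 ≤ κ := hk.le
  -- equivalence I κ ≃ I κ ⊕ I κ
  have hsum : #(I κ) = #(I κ ⊕ I κ) := by
    simp [Cardinal.mk_sum, hI, Cardinal.add_eq_self hinf]
  obtain ⟨e⟩ := Cardinal.eq.mp hsum
  -- embedding of B into I κ
  have hBle : #B ≤ #(I κ) := by rw [hI]; exact hB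
  obtain ⟨s⟩ := hBle
  -- default center
  let d : Sp κ Bool := fun _ => false
  let bfun : I κ → Sp κ Bool :=
    Function.extend s (fun b => (b : Sp κ Bool)) (fun _ => d)
  have hbfun : ∀ b : B, bfun (s b) = (b : Sp κ Bool) := fun b =>
    s.injective.extend_apply _ _ b
  -- the open set G
  let G : Set (Sp κ Bool) := ⋃ i : I κ, cyl κ Bool (bfun i) (ξ (e.symm (Sum.inl i)))
  have hGopen : OpenK κ Bool G := by
    unfold OpenK
    letI := bt κ Bool
    apply isOpen_iUnion
    intro i
    exact TopologicalSpace.GenerateOpen.basic _ ⟨bfun i, _, rfl⟩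
  have hBG : B ⊆ G := by
    intro b hb
    refine Set.mem_iUnion.mpr ⟨s ⟨b, hb⟩, ?_⟩
    intro β _
    rw [hbfun ⟨b, hb⟩]
  have hSG : #↥(S \ G) ≤ #(I κ) := by rw [hI]; exact hconc G hGopen hBG
  obtain ⟨t⟩ := hSG
  let sfun : I κ → Sp κ Bool :=
    Function.extend t (fun y => (y : Sp κ Bool)) (fun _ => d)
  have hsfun : ∀ y : ↥(S \ G), sfun (t y) = (y : Sp κ Bool) := fun y =>
    t.injective.extend_apply _ _ y
  refine ⟨fun α => Sum.elim bfun sfun (e α), ?_⟩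
  intro y hy
  by_cases hyG : y ∈ G
  · obtain ⟨i, hyT⟩ := Set.mem_iUnion.mp hyG
    refine Set.mem_iUnion.mpr ⟨e.symm (Sum.inl i), ?_⟩
    intro β hβ
    have := hyT β (by simpa using hβ)
    simpa [Equiv.apply_symm_apply] using this
  · refine Set.mem_iUnion.mpr ⟨e.symm (Sum.inr (t ⟨y, hy, hyG⟩)), ?_⟩
    intro β _
    simp [Equiv.apply_symm_apply, hsfun ⟨y, hy, hyG⟩]

end GenSp
end
end
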